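/- For every n ≥ 2 and every flip distribution D with p_1 > 0, the runtime T of the (1+1)-EA_D on OneMax (the function f = OM) satisfies E[T] ≤ n·(ln n + 1)/p_1, and for every r > 0, Pr[T > n·(ln n + r)/p_1] ≤ e^{−r}. -/

import Mathlib

open scoped BigOperators ENNReal Classical

/-- The search space `{0,1}^n`. -/
abbrev Point (n : ℕ) := Fin n → Bool

/-- `OM x` is the number of one-bits of `x`. -/
def OM {n : ℕ} (x : Point n) : ℕ := (Finset.univ.filter fun i => x i = true).card

/-- Hamming distance between two points. -/
def hamming {n : ℕ} (x y : Point n) : ℕ := (Finset.univ.filter fun i => x i ≠ y i).card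

/-- A flip distribution `D = (p_0, …, p_n)` on `{0,…,n}`. -/
structure FlipDist (n : ℕ) where
  p : ℕ → ℝ
  nonneg : ∀ k, 0 ≤ p k
  sum_eq : ∑ k ∈ Finset.range (n+1), p k = 1
  zero_of_gt : ∀ k, n < k → p k = 0

/-- The mean `χ = Σ k·p_k` of a flip distribution. -/
noncomputable def FlipDist.mean {n : ℕ} (D : FlipDist n) : ℝ :=
  ∑ k ∈ Finset.range (n+1), (k : ℝ) * D.p k

/-- `mutP D x y` is the probability that `mut_D(x) = y`: sample `k ∼ D`, then flip a
uniformly random set of exactly `k` positions.  Exactly one `k`-set maps `x` to `y`,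
namely when `k` is the Hamming distance. -/
noncomputable def mutP {n : ℕ} (D : FlipDist n) (x y : Point n) : ℝ :=
  D.p (hamming x y) / (Nat.choose n (hamming x y) : ℝ)

/-- `x` is a global maximum of `f`. -/
def isOpt {n : ℕ} (f : Point n → ℝ) (x : Point n) : Prop := ∀ y, f y ≤ f x

/-- One-step transition probability of the elitist (1+1)-EA_D maximizing `f`. -/
noncomputable def eaStep {n : ℕ} (D : FlipDist n) (f : Point n → ℝ) (x y : Point n) : ℝ :=
  (if f x ≤ f y then mutP D x y else 0) +
  (if y = x then ∑ z ∈ Finset.univ.filter (fun z => f z < f x), mutP D x z else 0)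

/-- Distribution of the current search point `x^(t)` of the (1+1)-EA_D maximizing `f`,
with initial distribution `init`. -/
noncomputable def eaDist {n : ℕ} (D : FlipDist n) (f : Point n → ℝ)
    (init : Point n → ℝ) : ℕ → Point n → ℝ
  | 0 => init
  | t+1 => fun y => ∑ x : Point n, eaDist D f init t x * eaStep D f x y

/-- `survival D f init t = Pr[T > t]`: since the set of global maxima is absorbing for the
elitist chain, this is the probability that `x^(t)` is not a global maximum of `f`. -/
noncomputable def survival {n : ℕ} (D : FlipDist n) (f : Point n → ℝ)
    (init : Point n → ℝ) (t : ℕ) : ℝ :=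
  ∑ x ∈ Finset.univ.filter (fun x => ¬ isOpt f x), eaDist D f init t x

/-- Expected runtime `E[T] = Σ_{t≥0} Pr[T > t]` of the (1+1)-EA_D on `f`. -/
noncomputable def expRuntime {n : ℕ} (D : FlipDist n) (f : Point n → ℝ)
    (init : Point n → ℝ) : ℝ≥0∞ :=
  ∑' t : ℕ, ENNReal.ofReal (survival D f init t)

/-- The uniform initial distribution on `{0,1}^n`. -/
noncomputable def uniformInit (n : ℕ) : Point n → ℝ := fun _ => ((2:ℝ)^n)⁻¹

/-- The linear function `f(x) = Σ w_i x_i`. -/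
noncomputable def linF {n : ℕ} (w : Fin n → ℝ) : Point n → ℝ :=
  fun x => ∑ i : Fin n, w i * (if x i then 1 else 0)

lemma hamming_le {n : ℕ} (x y : Point n) : hamming x y ≤ n := by
  have := Finset.card_filter_le (Finset.univ : Finset (Fin n)) (fun i => x i ≠ y i)
  simpa [hamming] using this

lemma OM_le {n : ℕ} (x : Point n) : OM x ≤ n := by
  have := Finset.card_filter_le (Finset.univ : Finset (Fin n)) (fun i => x i = true)
  simpa [OM] using this

lemma card_hamming_eq {n : ℕ} (x : Point n) (k : ℕ) :
    (Finset.univ.filter (fun y : Point n => hamming x y = k)).card = n.choose k := by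
  classical
  have hpc : n.choose k = (Finset.powersetCard k (Finset.univ : Finset (Fin n))).card := by
    simp [Finset.card_powersetCard]
  rw [hpc]
  apply Finset.card_bij (fun y _ => Finset.univ.filter (fun i => x i ≠ y i))
  · intro y hy
    simp only [Finset.mem_filter, Finset.mem_univ, true_and] at hy
    simp only [Finset.mem_powersetCard_univ]
    exact hy
  · intro a ha b hb hab
    funext i
    have := Finset.ext_iff.mp hab i
    simp only [Finset.mem_filter, Finset.mem_univ, true_and] at this
    cases hx : x i <;> cases hA : a i <;> cases hB : b i <;> simp_all
  · intro s hs
    simp only [Finset.mem_powersetCard_univ] at hs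
    refine ⟨fun i => if i ∈ s then !x i else x i, ?_, ?_⟩
    · refine Finset.mem_filter.mpr ⟨Finset.mem_univ _, ?_⟩
      simp only [hamming]
      rw [← hs]
      congr 1
      ext i
      by_cases hi : i ∈ s <;> cases hx : x i <;> simp [hi, hx]
    · ext i
      by_cases hi : i ∈ s <;> cases hx : x i <;> simp [hi, hx]

lemma mutP_nonneg {n : ℕ} (D : FlipDist n) (x y : Point n) : 0 ≤ mutP D x y :=
  div_nonneg (D.nonneg _) (by positivity)

lemma sum_mutP {n : ℕ} (D : FlipDist n) (x : Point n) :
    ∑ y : Point n, mutP D x y = 1 := by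
  classical
  rw [← D.sum_eq]
  rw [← Finset.sum_fiberwise_of_maps_to (g := fun y : Point n => hamming x y)
      (fun y _ => Finset.mem_range.mpr (Nat.lt_succ_of_le (hamming_le x y)))]
  refine Finset.sum_congr rfl fun k hk => ?_
  have hsum : ∑ y ∈ Finset.univ.filter (fun y : Point n => hamming x y = k), mutP D x y
      = ∑ y ∈ Finset.univ.filter (fun y : Point n => hamming x y = k),
        D.p k / (n.choose k : ℝ) := by
    refine Finset.sum_congr rfl fun y hy => ?_
    simp only [Finset.mem_filter] at hy
    rw [mutP, hy.2]
  rw [hsum, Finset.sum_const, card_hamming_eq, nsmul_eq_mul]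
  have hc : (0:ℝ) < (n.choose k : ℝ) := by
    exact_mod_cast Nat.choose_pos (Nat.lt_succ_iff.mp (Finset.mem_range.mp hk))
  field_simp

lemma eaStep_nonneg {n : ℕ} (D : FlipDist n) (f : Point n → ℝ) (x y : Point n) :
    0 ≤ eaStep D f x y := by
  unfold eaStep
  refine add_nonneg ?_ ?_
  · split
    · exact mutP_nonneg D x y
    · exact le_refl 0
  · split
    · exact Finset.sum_nonneg fun z _ => mutP_nonneg D x z
    · exact le_refl 0

lemma sum_eaStep {n : ℕ} (D : FlipDist n) (f : Point n → ℝ) (x : Point n) :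
    ∑ y : Point n, eaStep D f x y = 1 := by
  classical
  unfold eaStep
  rw [Finset.sum_add_distrib, Finset.sum_ite_eq' Finset.univ x, if_pos (Finset.mem_univ x)]
  rw [← Finset.sum_filter]
  have hpart : (Finset.univ.filter (fun z : Point n => f z < f x))
      = Finset.univ.filter (fun z : Point n => ¬ (f x ≤ f z)) := by
    refine Finset.filter_congr fun z _ => ?_
    simp [not_le]
  rw [hpart, Finset.sum_filter_add_sum_filter_not Finset.univ (fun z : Point n => f x ≤ f z)]
  exact sum_mutP D x

section drift
variable {n : ℕ}

lemma OM_update {x : Point n} {i : Fin n} (hi : x i = false) :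
    OM (Function.update x i true) = OM x + 1 := by
  classical
  have : (Finset.univ.filter fun j => Function.update x i true j = true)
      = insert i (Finset.univ.filter fun j => x j = true) := by
    ext j
    by_cases hj : j = i <;> simp [Function.update, hj, hi]
  rw [OM, this, Finset.card_insert_of_notMem (by simp [hi]), OM]

lemma hamming_update {x : Point n} {i : Fin n} (hi : x i = false) :
    hamming x (Function.update x i true) = 1 := by
  classical
  have : (Finset.univ.filter fun j => x j ≠ Function.update x i true j) = {i} := by
    ext j
    by_cases hj : j = i <;> simp [Function.update, hj, hi]
  rw [hamming, this, Finset.card_singleton]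

lemma step_drift (hn : 1 ≤ n) (D : FlipDist n) (x : Point n) :
    ∑ y : Point n, eaStep D (fun z => (OM z : ℝ)) x y * ((n:ℝ) - OM y)
      ≤ (1 - D.p 1 / n) * ((n:ℝ) - OM x) := by
  classical
  set f : Point n → ℝ := fun z => (OM z : ℝ) with hf
  have hn0 : (0:ℝ) < n := by exact_mod_cast hn
  -- rewrite LHS
  have key : ∑ y : Point n, eaStep D f x y * ((n:ℝ) - OM y)
      = ((n:ℝ) - OM x) - ∑ y : Point n, eaStep D f x y * (((OM y : ℝ)) - OM x) := by
    have h1 : ∀ y : Point n, eaStep D f x y * ((n:ℝ) - OM y)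
        = eaStep D f x y * ((n:ℝ) - OM x) - eaStep D f x y * (((OM y:ℝ)) - OM x) := by
      intro y; ring
    rw [Finset.sum_congr rfl (fun y _ => h1 y), Finset.sum_sub_distrib, ← Finset.sum_mul,
      sum_eaStep, one_mul]
  rw [key]
  -- suffices to show the gain S is at least δ * (n - OM x)
  have main : (D.p 1 / n) * ((n:ℝ) - OM x)
      ≤ ∑ y : Point n, eaStep D f x y * (((OM y : ℝ)) - OM x) := by
    set Z : Finset (Fin n) := Finset.univ.filter (fun i => x i = false) with hZ
    set u : Fin n → Point n := fun i => Function.update x i true with hu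
    have hterm : ∀ y : Point n, 0 ≤ eaStep D f x y * (((OM y : ℝ)) - OM x) := by
      intro y
      by_cases hxy : y = x
      · subst hxy; simp
      · by_cases hle : f x ≤ f y
        · have : (0:ℝ) ≤ (OM y : ℝ) - OM x := by
            simp only [hf] at hle; linarith
          exact mul_nonneg (eaStep_nonneg D f x y) this
        · have : eaStep D f x y = 0 := by
            rw [eaStep, if_neg hle, if_neg hxy]; ring
          simp [this]
    have hinj : Set.InjOn u Z := by
      intro i hi j hj hij
      simp only [hZ, Finset.coe_filter, Set.mem_setOf_eq] at hi hj
      by_contra hne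
      have h1 : u i i = true := by simp [hu, Function.update]
      have h2 : u j i = x i := by simp [hu, Function.update, hne]
      rw [hij] at h1
      rw [h1] at h2
      rw [hi.2] at h2
      exact Bool.noConfusion h2
    have hstep : ∀ i ∈ Z, D.p 1 / n ≤ eaStep D f x (u i) * (((OM (u i) : ℝ)) - OM x) := by
      intro i hi
      have hix : x i = false := by simpa [hZ] using hi
      have hOM := OM_update (x := x) hix
      have hfle : f x ≤ f (u i) := by simp [hf, hu, hOM]
      have hne : u i ≠ x := by
        intro h
        have := congrFun h i
        simp [hu, Function.update, hix] at this
      have hmut : mutP D x (u i) = D.p 1 / n := by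
        rw [mutP, hu]
        simp only
        rw [hamming_update hix, Nat.choose_one_right]
      have hstep1 : D.p 1 / n ≤ eaStep D f x (u i) := by
        rw [eaStep, if_pos hfle, if_neg hne, add_zero, hmut]
      have hdiff : ((OM (u i) : ℝ)) - OM x = 1 := by rw [hOM]; push_cast; ring
      calc D.p 1 / n ≤ eaStep D f x (u i) := hstep1
        _ = eaStep D f x (u i) * (((OM (u i) : ℝ)) - OM x) := by rw [hdiff, mul_one]
    have h1 : ∑ y ∈ Z.image u, eaStep D f x y * (((OM y : ℝ)) - OM x)
        ≤ ∑ y : Point n, eaStep D f x y * (((OM y : ℝ)) - OM x) :=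
      Finset.sum_le_sum_of_subset_of_nonneg (Finset.subset_univ _) (fun y _ _ => hterm y)
    have h2 : ∑ y ∈ Z.image u, eaStep D f x y * (((OM y : ℝ)) - OM x)
        = ∑ i ∈ Z, eaStep D f x (u i) * (((OM (u i) : ℝ)) - OM x) :=
      Finset.sum_image (fun a ha b hb h => hinj ha hb h)
    have h3 : (Z.card : ℝ) * (D.p 1 / n)
        ≤ ∑ i ∈ Z, eaStep D f x (u i) * (((OM (u i) : ℝ)) - OM x) := by
      calc (Z.card : ℝ) * (D.p 1 / n) = ∑ _i ∈ Z, D.p 1 / n := by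
            rw [Finset.sum_const, nsmul_eq_mul]
        _ ≤ _ := Finset.sum_le_sum hstep
    have hcard : (Z.card : ℝ) = (n:ℝ) - OM x := by
      have hpn : (Finset.univ.filter fun i => x i = true).card
          + (Finset.univ.filter fun i => ¬ (x i = true)).card = n := by
        rw [Finset.card_filter_add_card_filter_not]
        simp
      have hZeq : Z = Finset.univ.filter fun i => ¬ (x i = true) := by
        rw [hZ]
        refine Finset.filter_congr fun i _ => ?_
        cases h : x i <;> simp
      have : OM x + Z.card = n := by rw [OM, hZeq]; exact hpn
      have := congrArg (Nat.cast (R := ℝ)) this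
      push_cast at this
      linarith
    calc D.p 1 / ↑n * ((n:ℝ) - OM x) = (Z.card : ℝ) * (D.p 1 / n) := by
          rw [hcard]; ring
      _ ≤ ∑ i ∈ Z, eaStep D f x (u i) * (((OM (u i) : ℝ)) - OM x) := h3
      _ = ∑ y ∈ Z.image u, eaStep D f x y * (((OM y : ℝ)) - OM x) := h2.symm
      _ ≤ _ := h1
  linarith
end drift

section chain
variable {n : ℕ} (D : FlipDist n) (f : Point n → ℝ) (init : Point n → ℝ)

lemma eaDist_nonneg (hinit : ∀ x, 0 ≤ init x) :
    ∀ t x, 0 ≤ eaDist D f init t x := by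
  intro t
  induction t with
  | zero => exact hinit
  | succ t ih =>
    intro y
    exact Finset.sum_nonneg fun x _ => mul_nonneg (ih x) (eaStep_nonneg D f x y)

lemma sum_eaDist (hinit : ∑ x : Point n, init x = 1) :
    ∀ t, ∑ x : Point n, eaDist D f init t x = 1 := by
  intro t
  induction t with
  | zero => exact hinit
  | succ t ih =>
    show ∑ y : Point n, ∑ x : Point n, eaDist D f init t x * eaStep D f x y = 1
    rw [Finset.sum_comm]
    calc ∑ x : Point n, ∑ y : Point n, eaDist D f init t x * eaStep D f x y
        = ∑ x : Point n, eaDist D f init t x * ∑ y : Point n, eaStep D f x y := by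
          refine Finset.sum_congr rfl fun x _ => ?_
          rw [Finset.mul_sum]
      _ = 1 := by
          simp_rw [sum_eaStep, mul_one]; exact ih

noncomputable def phi {n : ℕ} (D : FlipDist n) (f : Point n → ℝ)
    (init : Point n → ℝ) (t : ℕ) : ℝ :=
  ∑ x : Point n, eaDist D f init t x * ((n:ℝ) - OM x)

lemma phi_succ_le (hn : 1 ≤ n) (hinit : ∀ x, 0 ≤ init x) (t : ℕ) :
    phi D (fun z => (OM z : ℝ)) init (t+1)
      ≤ (1 - D.p 1 / n) * phi D (fun z => (OM z : ℝ)) init t := by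
  classical
  set f : Point n → ℝ := fun z => (OM z : ℝ)
  calc phi D f init (t+1)
      = ∑ y : Point n, (∑ x : Point n, eaDist D f init t x * eaStep D f x y) * ((n:ℝ) - OM y) := rfl
    _ = ∑ x : Point n, eaDist D f init t x *
          ∑ y : Point n, eaStep D f x y * ((n:ℝ) - OM y) := by
        simp_rw [Finset.sum_mul, Finset.mul_sum]
        rw [Finset.sum_comm]
        simp_rw [mul_assoc]
    _ ≤ ∑ x : Point n, eaDist D f init t x * ((1 - D.p 1 / n) * ((n:ℝ) - OM x)) := by
        refine Finset.sum_le_sum fun x _ => ?_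
        exact mul_le_mul_of_nonneg_left (step_drift hn D x) (eaDist_nonneg D f init hinit t x)
    _ = (1 - D.p 1 / n) * phi D f init t := by
        rw [phi, Finset.mul_sum]
        refine Finset.sum_congr rfl fun x _ => ?_
        ring

lemma sum_OM (n : ℕ) : ∑ x : Point n, (OM x : ℝ) = n * 2^n / 2 := by
  classical
  have hinv : Function.Involutive (fun x : Point n => fun i => !x i) := by
    intro x; funext i; simp
  let e := hinv.toPerm
  have hcomp : ∑ x : Point n, (OM (e x) : ℝ) = ∑ x : Point n, (OM x : ℝ) :=
    Equiv.sum_comp e (fun x : Point n => (OM x : ℝ))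
  have hpair : ∀ x : Point n, (OM x : ℝ) + (OM (e x) : ℝ) = n := by
    intro x
    have h2 : OM x + OM (e x) = n := by
      have hc := Finset.card_filter_add_card_filter_not
        (s := (Finset.univ : Finset (Fin n))) (p := fun i => x i = true)
      simp only [Finset.card_univ, Fintype.card_fin] at hc
      have hfe : (Finset.univ.filter fun i => e x i = true)
          = Finset.univ.filter fun a => ¬ x a = true := by
        refine Finset.filter_congr fun i _ => ?_
        have hrfl : e x i = !x i := rfl
        rw [hrfl]
        cases hxi : x i <;> simp [hxi]
      rw [OM, OM, hfe]
      exact hc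
    exact_mod_cast congrArg (Nat.cast (R := ℝ)) h2
  have h3 : (2:ℝ) * ∑ x : Point n, (OM x : ℝ) = n * 2^n := by
    have h : ∑ x : Point n, ((OM x : ℝ) + (OM (e x) : ℝ)) = ∑ x : Point n, (n:ℝ) :=
      Finset.sum_congr rfl fun x _ => hpair x
    rw [Finset.sum_add_distrib, hcomp] at h
    rw [Finset.sum_const, Finset.card_univ] at h
    have hcard : Fintype.card (Point n) = 2^n := by
      simp [Fintype.card_fun]
    rw [hcard, nsmul_eq_mul] at h
    push_cast at h ⊢
    linarith
  linarith

lemma phi_zero (n : ℕ) (D : FlipDist n) :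
    phi D (fun z => (OM z : ℝ)) (uniformInit n) 0 = n / 2 := by
  classical
  have h2 : (0:ℝ) < 2^n := by positivity
  calc phi D (fun z => (OM z : ℝ)) (uniformInit n) 0
      = ∑ x : Point n, ((2:ℝ)^n)⁻¹ * ((n:ℝ) - OM x) := rfl
    _ = ((2:ℝ)^n)⁻¹ * ∑ x : Point n, ((n:ℝ) - OM x) := by rw [← Finset.mul_sum]
    _ = n / 2 := by
        rw [Finset.sum_sub_distrib, Finset.sum_const, Finset.card_univ, sum_OM]
        have hcard : Fintype.card (Point n) = 2^n := by simp [Fintype.card_fun]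
        rw [hcard, nsmul_eq_mul]
        push_cast
        field_simp
        ring

end chain

section endgame
variable {n : ℕ}

lemma p_le_one (D : FlipDist n) (hn : 1 ≤ n) : D.p 1 ≤ 1 := by
  rw [← D.sum_eq]
  exact Finset.single_le_sum (fun k _ => D.nonneg k) (Finset.mem_range.mpr (by omega))

lemma uniformInit_nonneg (x : Point n) : 0 ≤ uniformInit n x := by
  unfold uniformInit; positivity

lemma survival_le_phi (D : FlipDist n) (init : Point n → ℝ)
    (hinit : ∀ x, 0 ≤ init x) (t : ℕ) :
    survival D (fun z => (OM z : ℝ)) init t ≤ phi D (fun z => (OM z : ℝ)) init t := by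
  classical
  set f : Point n → ℝ := fun z => (OM z : ℝ) with hf
  have hg0 : ∀ x : Point n, (0:ℝ) ≤ (n:ℝ) - OM x := by
    intro x
    have := OM_le x
    have : (OM x : ℝ) ≤ n := by exact_mod_cast this
    linarith
  calc survival D f init t
      ≤ ∑ x ∈ Finset.univ.filter (fun x => ¬ isOpt f x),
          eaDist D f init t x * ((n:ℝ) - OM x) := by
        refine Finset.sum_le_sum fun x hx => ?_
        simp only [Finset.mem_filter] at hx
        have hlt : OM x < n := by
          rcases lt_or_eq_of_le (OM_le x) with h' | h'
          · exact h'
          · refine absurd (fun y => ?_) hx.2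
            show (OM y : ℝ) ≤ OM x
            have := OM_le y
            have hy : (OM y : ℝ) ≤ n := by exact_mod_cast this
            rw [h']
            exact_mod_cast hy
        have h1 : (1:ℝ) ≤ (n:ℝ) - OM x := by
          have : (OM x : ℝ) + 1 ≤ n := by exact_mod_cast hlt
          linarith
        exact le_mul_of_one_le_right (eaDist_nonneg D f init hinit t x) h1
    _ ≤ phi D f init t := by
        refine Finset.sum_le_sum_of_subset_of_nonneg (Finset.filter_subset _ _)
          fun x _ _ => mul_nonneg (eaDist_nonneg D f init hinit t x) (hg0 x)

lemma survival_le_one (D : FlipDist n) (f : Point n → ℝ) (init : Point n → ℝ)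
    (hinit : ∀ x, 0 ≤ init x) (t : ℕ) (hs : ∑ x : Point n, eaDist D f init t x = 1) :
    survival D f init t ≤ 1 := by
  classical
  rw [← hs, survival]
  exact Finset.sum_le_sum_of_subset_of_nonneg (Finset.filter_subset _ _)
    fun x _ _ => eaDist_nonneg D f init hinit t x

lemma survival_nonneg (D : FlipDist n) (f : Point n → ℝ) (init : Point n → ℝ)
    (hinit : ∀ x, 0 ≤ init x) (t : ℕ) : 0 ≤ survival D f init t :=
  Finset.sum_nonneg fun x _ => eaDist_nonneg D f init hinit t x

lemma sum_uniformInit : ∑ x : Point n, uniformInit n x = 1 := by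
  unfold uniformInit
  rw [Finset.sum_const, Finset.card_univ]
  have hcard : Fintype.card (Point n) = 2^n := by simp [Fintype.card_fun]
  rw [hcard, nsmul_eq_mul]
  push_cast
  have : ((2:ℝ)^n) ≠ 0 := by positivity
  field_simp

lemma phi_le (D : FlipDist n) (hn : 1 ≤ n) (hd : 1 - D.p 1 / n ≥ 0) (t : ℕ) :
    phi D (fun z => (OM z : ℝ)) (uniformInit n) t ≤ (1 - D.p 1 / n)^t * (n / 2) := by
  induction t with
  | zero => rw [phi_zero, pow_zero, one_mul]
  | succ t ih =>
    calc phi D (fun z => (OM z : ℝ)) (uniformInit n) (t+1)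
        ≤ (1 - D.p 1 / n) * phi D (fun z => (OM z : ℝ)) (uniformInit n) t :=
          phi_succ_le D (uniformInit n) hn (fun x => uniformInit_nonneg x) t
      _ ≤ (1 - D.p 1 / n) * ((1 - D.p 1 / n)^t * (n / 2)) :=
          mul_le_mul_of_nonneg_left ih hd
      _ = (1 - D.p 1 / n)^(t+1) * (n / 2) := by ring
end endgame

-- abstract endgame: given survival bounds, conclude.
section endgame
variable {n : ℕ}

lemma endgame (n : ℕ) (hn : 2 ≤ n) (p1 : ℝ) (hp0 : 0 < p1) (hp1 : p1 ≤ 1)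
    (s : ℕ → ℝ) (hs0 : ∀ t, 0 ≤ s t) (hs1 : ∀ t, s t ≤ 1)
    (hsb : ∀ t, s t ≤ (1 - p1 / n)^t * (n / 2)) :
    (∑' t : ℕ, ENNReal.ofReal (s t))
        ≤ ENNReal.ofReal ((n : ℝ) * (Real.log n + 1) / p1) ∧
    ∀ r : ℝ, 0 < r → s ⌊(n : ℝ) * (Real.log n + r) / p1⌋₊ ≤ Real.exp (-r) := by
  have hn0 : (0:ℝ) < n := by positivity
  have hn2 : (2:ℝ) ≤ n := by exact_mod_cast hn
  set δ : ℝ := p1 / n with hδ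
  have hδ0 : 0 < δ := by positivity
  have hδh : δ ≤ 1/2 := by
    rw [hδ, div_le_iff₀ hn0]
    nlinarith
  set q : ℝ := 1 - δ with hq
  have hq0 : 0 ≤ q := by rw [hq]; linarith
  have hq1 : q < 1 := by rw [hq]; linarith
  have hqe : q ≤ Real.exp (-δ) := by
    have := Real.add_one_le_exp (-δ)
    rw [hq]; linarith
  have hqet : ∀ t : ℕ, q ^ t ≤ Real.exp (-(δ * t)) := by
    intro t
    have h1 : q ^ t ≤ (Real.exp (-δ)) ^ t := pow_le_pow_left₀ hq0 hqe t
    rwa [← Real.exp_nat_mul, mul_comm, neg_mul] at h1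
  have hlogn : 0 ≤ Real.log n := Real.log_nonneg (by linarith)
  have hlog2 : (1:ℝ)/2 ≤ Real.log 2 := by
    have := Real.log_two_gt_d9
    linarith
  constructor
  · -- expectation bound
    set t1 : ℕ := ⌈(n:ℝ) * Real.log n / p1⌉₊ with ht1
    have hB0 : 0 ≤ (n:ℝ) * Real.log n / p1 := by positivity
    have ht1B : (t1:ℝ) < (n:ℝ) * Real.log n / p1 + 1 := Nat.ceil_lt_add_one hB0
    have hδt1 : Real.log n ≤ δ * t1 := by
      have h1 : (n:ℝ) * Real.log n / p1 ≤ (t1:ℝ) := Nat.le_ceil _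
      have h2 : δ * ((n:ℝ) * Real.log n / p1) = Real.log n := by
        rw [hδ]; field_simp
      calc Real.log n = δ * ((n:ℝ) * Real.log n / p1) := h2.symm
        _ ≤ δ * t1 := by nlinarith
    have hqt1 : q ^ t1 ≤ (n:ℝ)⁻¹ := by
      calc q ^ t1 ≤ Real.exp (-(δ * t1)) := hqet t1
        _ ≤ Real.exp (-(Real.log n)) := by
            apply Real.exp_le_exp.mpr; linarith
        _ = (n:ℝ)⁻¹ := by
            rw [Real.exp_neg, Real.exp_log hn0]
    set h : ℕ → ℝ := fun t => min 1 (q^t * (n/2)) with hh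
    have hhn : ∀ t, 0 ≤ h t := fun t => le_min zero_le_one (by positivity)
    have hsh : ∀ t, s t ≤ h t := fun t => le_min (hs1 t) (hsb t)
    have hgeo : Summable (fun t : ℕ => q^t * (n/2)) :=
      (summable_geometric_of_lt_one hq0 hq1).mul_right _
    have hhs : Summable h :=
      Summable.of_nonneg_of_le hhn (fun t => min_le_right _ _) hgeo
    have hsplit := Summable.sum_add_tsum_nat_add (f := h) t1 hhs
    have hhead : ∑ i ∈ Finset.range t1, h i ≤ t1 := by
      calc ∑ i ∈ Finset.range t1, h i ≤ ∑ i ∈ Finset.range t1, 1 :=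
            Finset.sum_le_sum fun i _ => min_le_left _ _
        _ = t1 := by simp
    have htailf : ∀ i : ℕ, h (i + t1) ≤ (q^t1 * (n/2)) * q^i := by
      intro i
      calc h (i + t1) ≤ q^(i + t1) * (n/2) := min_le_right _ _
        _ = (q^t1 * (n/2)) * q^i := by rw [pow_add]; ring
    have htail : (∑' i : ℕ, h (i + t1)) ≤ (q^t1 * (n/2)) / δ := by
      have hsum2 : Summable (fun i : ℕ => (q^t1 * (n/2)) * q^i) :=
        (summable_geometric_of_lt_one hq0 hq1).mul_left _
      calc (∑' i : ℕ, h (i + t1)) ≤ ∑' i : ℕ, (q^t1 * (n/2)) * q^i :=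
            Summable.tsum_le_tsum htailf ((summable_nat_add_iff t1).mpr hhs) hsum2
        _ = (q^t1 * (n/2)) * (1 - q)⁻¹ := by
            rw [tsum_mul_left, tsum_geometric_of_lt_one hq0 hq1]
        _ = (q^t1 * (n/2)) / δ := by
            rw [hq]; ring_nf
    have htsum : (∑' t : ℕ, h t) ≤ (n:ℝ) * (Real.log n + 1) / p1 := by
      rw [← hsplit]
      have h2 : (q^t1 * (n/2)) / δ ≤ (n:ℝ) / (2 * p1) := by
        have hc : q^t1 * (n/2) ≤ 1/2 := by
          calc q^t1 * (n/2) ≤ (n:ℝ)⁻¹ * (n/2) := by nlinarith [pow_nonneg hq0 t1]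
            _ = 1/2 := by field_simp
        rw [div_le_iff₀ hδ0]
        have he : (n:ℝ) / (2*p1) * δ = 1/2 := by rw [hδ]; field_simp
        rw [he]
        exact hc
      have h3 : (t1:ℝ) + (n:ℝ)/(2*p1) ≤ (n:ℝ) * (Real.log n + 1) / p1 := by
        have e1 : (n:ℝ) * (Real.log n + 1) / p1 = (n:ℝ) * Real.log n / p1 + (n:ℝ)/p1 := by
          field_simp
        have e2 : (1:ℝ) + (n:ℝ)/(2*p1) ≤ (n:ℝ)/p1 := by
          have h2p : (0:ℝ) < 2*p1 := by positivity
          rw [← sub_nonneg]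
          have he : (n:ℝ)/p1 - (1 + (n:ℝ)/(2*p1)) = ((n:ℝ) - 2*p1)/(2*p1) := by
            field_simp; ring
          rw [he]
          apply div_nonneg _ h2p.le
          nlinarith
        linarith
      linarith [add_le_add hhead htail]
    calc (∑' t : ℕ, ENNReal.ofReal (s t)) ≤ ∑' t : ℕ, ENNReal.ofReal (h t) :=
          ENNReal.tsum_le_tsum fun t => ENNReal.ofReal_le_ofReal (hsh t)
      _ = ENNReal.ofReal (∑' t : ℕ, h t) := (ENNReal.ofReal_tsum_of_nonneg hhn hhs).symm
      _ ≤ ENNReal.ofReal ((n : ℝ) * (Real.log n + 1) / p1) :=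
          ENNReal.ofReal_le_ofReal htsum
  · -- tail bound
    intro r hr
    set t0 : ℕ := ⌊(n : ℝ) * (Real.log n + r) / p1⌋₊ with ht0
    have hA : δ * ((n : ℝ) * (Real.log n + r) / p1) = Real.log n + r := by
      rw [hδ]; field_simp
    have hfl : (n : ℝ) * (Real.log n + r) / p1 - 1 ≤ (t0:ℝ) := by
      have := Nat.lt_floor_add_one ((n : ℝ) * (Real.log n + r) / p1)
      linarith
    have hδt0 : Real.log n + r - δ ≤ δ * t0 := by
      nlinarith [hfl, hA, hδ0.le]
    calc s t0 ≤ q ^ t0 * (n/2) := hsb t0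
      _ ≤ Real.exp (-(δ * t0)) * (n/2) := by
          exact mul_le_mul_of_nonneg_right (hqet t0) (by positivity)
      _ = Real.exp (Real.log n - Real.log 2 - δ * t0) := by
          rw [Real.exp_sub, Real.exp_sub, Real.exp_log hn0, Real.exp_log (by norm_num : (0:ℝ) < 2)]
          rw [Real.exp_neg]
          field_simp
      _ ≤ Real.exp (-r) := by
          apply Real.exp_le_exp.mpr
          linarith
end endgame

/-- For every `n ≥ 2` and every flip distribution with `p₁ > 0`, the
runtime `T` of the (1+1)-EA_D on OneMax satisfies `E[T] ≤ n·(ln n + 1)/p₁`, and for every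
`r > 0`, `Pr[T > n·(ln n + r)/p₁] ≤ e^{−r}`. -/
theorem stmt1 (n : ℕ) (hn : 2 ≤ n) (D : FlipDist n) (hp1 : 0 < D.p 1) :
    expRuntime D (fun x => (OM x : ℝ)) (uniformInit n)
        ≤ ENNReal.ofReal ((n : ℝ) * (Real.log n + 1) / D.p 1) ∧
    ∀ r : ℝ, 0 < r →
      survival D (fun x => (OM x : ℝ)) (uniformInit n)
          ⌊(n : ℝ) * (Real.log n + r) / D.p 1⌋₊
        ≤ Real.exp (-r) := by
  have hn1 : 1 ≤ n := by omega
  have hn0 : (0:ℝ) < n := by exact_mod_cast Nat.lt_of_lt_of_le Nat.zero_lt_two hn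
  have hinitnn : ∀ x, 0 ≤ uniformInit n x := fun x => uniformInit_nonneg x
  have hple : D.p 1 ≤ 1 := p_le_one D hn1
  have hd : 1 - D.p 1 / n ≥ 0 := by
    have hn1' : (1:ℝ) ≤ n := by exact_mod_cast hn1
    have h1 : D.p 1 / n ≤ 1 := by
      rw [div_le_one hn0]
      linarith
    linarith
  have hsb : ∀ t, survival D (fun x => (OM x : ℝ)) (uniformInit n) t
      ≤ (1 - D.p 1 / n)^t * (n / 2) := fun t =>
    (survival_le_phi D (uniformInit n) hinitnn t).trans (phi_le D hn1 hd t)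
  have hs1 : ∀ t, survival D (fun x => (OM x : ℝ)) (uniformInit n) t ≤ 1 := fun t =>
    survival_le_one D _ (uniformInit n) hinitnn t
      (sum_eaDist D _ (uniformInit n) sum_uniformInit t)
  have hs0 : ∀ t, 0 ≤ survival D (fun x => (OM x : ℝ)) (uniformInit n) t := fun t =>
    survival_nonneg D _ (uniformInit n) hinitnn t
  have h := endgame n hn (D.p 1) hp1 hple
    (survival D (fun x => (OM x : ℝ)) (uniformInit n)) hs0 hs1 hsb
  exact ⟨h.1, h.2⟩
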